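/- Given constants k1, k2, d1, d2, r1, r2 > 0 with r2*(1-k2) - d2*k2 ≠ 0 and r1*(1-k1) - d1*k1 ≠ 0, if x = (r2^2*(k1+k2-1) + r2*d2*(k1+k2)) / (r2*(1-k2) - d2*k2) and y = (r1^2*(k1+k2-1) + r1*d1*(k1+k2)) / (r1*(1-k1) - d1*k1), then k1 = ((r1/(r1+d1)) - (r1/(r1+y))*(r2/(r2+d2))) / (1 - (r2/(r2+x))*(r1/(r1+y))) and k2 = ((r2/(r2+d2)) - (r2/(r2+x))*(r1/(r1+d1))) / (1 - (r2/(r2+x))*(r1/(r1+y))), provided r1+y ≠ 0, r2+x ≠ 0, and 1 - (r2/(r2+x))*(r1/(r1+y)) ≠ 0. -/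

import Mathlib

theorem effective_distances_solve_fixed_point
    (k1 k2 d1 d2 r1 r2 x y : ℝ)
    (hk1 : 0 < k1) (hk2 : 0 < k2) (hd1 : 0 < d1) (hd2 : 0 < d2)
    (hr1 : 0 < r1) (hr2 : 0 < r2)
    (hden2 : r2 * (1 - k2) - d2 * k2 ≠ 0) (hden1 : r1 * (1 - k1) - d1 * k1 ≠ 0)
    (hx : x = (r2 ^ 2 * (k1 + k2 - 1) + r2 * d2 * (k1 + k2)) / (r2 * (1 - k2) - d2 * k2))
    (hy : y = (r1 ^ 2 * (k1 + k2 - 1) + r1 * d1 * (k1 + k2)) / (r1 * (1 - k1) - d1 * k1))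
    (hry : r1 + y ≠ 0) (hrx : r2 + x ≠ 0)
    (hD : 1 - (r2 / (r2 + x)) * (r1 / (r1 + y)) ≠ 0) :
    k1 = ((r1 / (r1 + d1)) - (r1 / (r1 + y)) * (r2 / (r2 + d2))) /
        (1 - (r2 / (r2 + x)) * (r1 / (r1 + y))) ∧
    k2 = ((r2 / (r2 + d2)) - (r2 / (r2 + x)) * (r1 / (r1 + d1))) /
        (1 - (r2 / (r2 + x)) * (r1 / (r1 + y))) := by
  have hrd1 : r1 + d1 ≠ 0 := by positivity
  have hrd2 : r2 + d2 ≠ 0 := by positivity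
  have hrx' : r2 + x = r2 * (r2 + d2) * k1 / (r2 * (1 - k2) - d2 * k2) := by
    rw [hx, add_div' _ _ _ hden2]; ring
  have hry' : r1 + y = r1 * (r1 + d1) * k2 / (r1 * (1 - k1) - d1 * k1) := by
    rw [hy, add_div' _ _ _ hden1]; ring
  have h2 : r2 / (r2 + x) = (r2 * (1 - k2) - d2 * k2) / ((r2 + d2) * k1) := by
    rw [hrx', div_div_eq_mul_div, div_eq_div_iff (by positivity) (by positivity)]; ring
  have h1 : r1 / (r1 + y) = (r1 * (1 - k1) - d1 * k1) / ((r1 + d1) * k2) := by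
    rw [hry', div_div_eq_mul_div, div_eq_div_iff (by positivity) (by positivity)]; ring
  rw [h1, h2] at hD ⊢
  have hk1' : k1 ≠ 0 := ne_of_gt hk1
  have hk2' : k2 ≠ 0 := ne_of_gt hk2
  rw [eq_div_iff hD, eq_div_iff hD]
  constructor <;> field_simp <;> ring
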